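/- arXiv:2007.03463 — 3 statements merged into one kernel-verified Lean document; each statement's English description precedes it below -/
import Mathlib

section
/- Let (f,g): X × Y → [0,1]² be a two-player game with compacta X, Y and continuous payoff functions f and g, and let ⋆ and ∗ be continuous t-norms. If a pair of possibility capacities (ν, μ) ∈ M_∪X × M_∪Y is an equilibrium under uncertainty with respect to ⋆, then (ν, μ) is a Nash equilibrium of the game in possibility-capacity strategies with expected payoffs ef(ν', μ') = ∫_{X×Y}^{∨⋆} f d(ν' ⊛ μ') and eg(ν', μ') = ∫_{X×Y}^{∨⋆} g d(ν' ⊛ μ'), where ⊛ is the tensor product generated by ∗; i.e. ef(ν', μ) ≤ ef(ν, μ) for all ν' ∈ M_∪X and eg(ν, μ') ≤ eg(ν, μ) for all μ' ∈ M_∪Y. -/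
open Set TopologicalSpace

universe u v

/-- A (upper-semicontinuous) capacity on a topological space `X`:
a normalized monotone set function on the closed subsets, upper semicontinuous
in the sense of Zarichnyi–Nykyforchyn. -/
structure Capacity (X : Type u) [TopologicalSpace X] : Type u where
  toFun : Closeds X → ℝ
  empty' : toFun ⊥ = 0
  univ' : toFun ⊤ = 1
  mono' : ∀ F G : Closeds X, F ≤ G → toFun F ≤ toFun G
  usc' : ∀ (F : Closeds X) (a : ℝ), toFun F < a →
    ∃ O : Set X, IsOpen O ∧ (F : Set X) ⊆ O ∧ ∀ B : Closeds X, (B : Set X) ⊆ O → toFun B < a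

namespace Capacity

variable {X : Type u} [TopologicalSpace X]

/-- Value of a capacity on (the closure of) an arbitrary set; on closed sets this is
the value of the capacity. -/
def cval (ν : Capacity X) (A : Set X) : ℝ := ν.toFun ⟨closure A, isClosed_closure⟩

/-- The sup-extension of a capacity to open sets:
`ν(U) = sup {ν K : K closed, K ⊆ U}`. -/
noncomputable def oval (ν : Capacity X) (U : Set X) : ℝ :=
  sSup {r : ℝ | ∃ K : Closeds X, (K : Set X) ⊆ U ∧ ν.toFun K = r}

end Capacity

/-- The topology on the space `MX` of capacities, generated by the subbase
`O₋(F,a) = {c : c(F) < a}` (`F` closed) and `O₊(U,a) = {c : c(U) > a}` (`U` open). -/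
instance capacityTopology (X : Type u) [TopologicalSpace X] : TopologicalSpace (Capacity X) :=
  TopologicalSpace.generateFrom
    ({S | ∃ (F : Closeds X) (a : ℝ), a ∈ Icc (0:ℝ) 1 ∧
        S = {c : Capacity X | c.toFun F < a}} ∪
     {S | ∃ U : Set X, IsOpen U ∧ ∃ a ∈ Icc (0:ℝ) 1,
        S = {c : Capacity X | a < c.oval U}})

/-- A possibility capacity: `ν(A ∪ B) = max (ν A) (ν B)` on closed sets. -/
def IsPossibility {X : Type u} [TopologicalSpace X] (ν : Capacity X) : Prop :=
  ∀ A B : Closeds X, ν.toFun (A ⊔ B) = max (ν.toFun A) (ν.toFun B)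

/-- A necessity capacity: `ν(A ∩ B) = min (ν A) (ν B)` on closed sets. -/
def IsNecessity {X : Type u} [TopologicalSpace X] (ν : Capacity X) : Prop :=
  ∀ A B : Closeds X, ν.toFun (A ⊓ B) = min (ν.toFun A) (ν.toFun B)

/-- A triangular norm on `[0,1]`. -/
structure Tnorm : Type where
  toFun : ℝ → ℝ → ℝ
  mem' : ∀ s ∈ Icc (0:ℝ) 1, ∀ t ∈ Icc (0:ℝ) 1, toFun s t ∈ Icc (0:ℝ) 1
  comm' : ∀ s ∈ Icc (0:ℝ) 1, ∀ t ∈ Icc (0:ℝ) 1, toFun s t = toFun t s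
  assoc' : ∀ s ∈ Icc (0:ℝ) 1, ∀ t ∈ Icc (0:ℝ) 1, ∀ r ∈ Icc (0:ℝ) 1,
    toFun (toFun s t) r = toFun s (toFun t r)
  mono' : ∀ s₁ ∈ Icc (0:ℝ) 1, ∀ s₂ ∈ Icc (0:ℝ) 1, ∀ t₁ ∈ Icc (0:ℝ) 1, ∀ t₂ ∈ Icc (0:ℝ) 1,
    s₁ ≤ s₂ → t₁ ≤ t₂ → toFun s₁ t₁ ≤ toFun s₂ t₂
  one' : ∀ s ∈ Icc (0:ℝ) 1, toFun s 1 = s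

/-- Continuity of a t-norm (on the unit square). -/
def Tnorm.Cont (star : Tnorm) : Prop :=
  ContinuousOn (fun q : ℝ × ℝ => star.toFun q.1 q.2) (Icc 0 1 ×ˢ Icc 0 1)

/-- The t-normed (fuzzy) integral `∫^{∨∗} f dν = sup { ν(f⁻¹[t,1]) ∗ t : t ∈ [0,1] }`. -/
noncomputable def tInt {X : Type u} [TopologicalSpace X] (star : Tnorm) (ν : Capacity X) (f : X → ℝ) : ℝ :=
  sSup {r : ℝ | ∃ t ∈ Icc (0:ℝ) 1, r = star.toFun (ν.cval (f ⁻¹' Icc t 1)) t}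
/-- `IsPossTensor₂ ast ν μ τ` says that `τ ∈ M_∪(X × Y)` is the tensor product `ν ⊛ μ`
(generated by the t-norm `ast`) of possibility capacities: the possibility capacity
with density `[ν ⊛ μ](x,y) = [ν](x) ∗ [μ](y)`. -/
def IsPossTensor₂ {X : Type u} {Y : Type v} [TopologicalSpace X] [TopologicalSpace Y]
    (ast : Tnorm) (ν : Capacity X) (μ : Capacity Y) (τ : Capacity (X × Y)) : Prop :=
  ∀ B : Set (X × Y), IsClosed B →
    τ.cval B = sSup ((fun q : X × Y => ast.toFun (ν.cval {q.1}) (μ.cval {q.2})) '' B)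
section Aux

open Capacity

variable {X : Type*} [TopologicalSpace X]

lemma Capacity.nonneg (ν : Capacity X) (F : Closeds X) : 0 ≤ ν.toFun F :=
  ν.empty' ▸ ν.mono' ⊥ F bot_le

lemma Capacity.le_one' (ν : Capacity X) (F : Closeds X) : ν.toFun F ≤ 1 :=
  ν.univ' ▸ ν.mono' F ⊤ le_top

lemma Capacity.cval_mem (ν : Capacity X) (A : Set X) : ν.cval A ∈ Icc (0:ℝ) 1 :=
  ⟨ν.nonneg _, ν.le_one' _⟩

lemma Capacity.cval_of_closed (ν : Capacity X) {A : Set X} (hA : IsClosed A) :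
    ν.cval A = ν.toFun ⟨A, hA⟩ := by
  unfold Capacity.cval
  congr 1
  exact Closeds.ext hA.closure_eq

lemma Capacity.cval_mono (ν : Capacity X) {A B : Set X} (h : A ⊆ B) :
    ν.cval A ≤ ν.cval B :=
  ν.mono' _ _ (closure_mono h)

lemma Capacity.nonempty_space (ν : Capacity X) : Nonempty X := by
  by_contra h
  rw [not_nonempty_iff] at h
  have he : (⊤ : Closeds X) = ⊥ := Closeds.ext (by
    rw [Closeds.coe_top]
    exact Set.univ_eq_empty_iff.2 h)
  have : (1:ℝ) = 0 := by rw [← ν.univ', he, ν.empty']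
  norm_num at this

namespace Tnorm

variable (τ : Tnorm)

lemma le_left {a b : ℝ} (ha : a ∈ Icc (0:ℝ) 1) (hb : b ∈ Icc (0:ℝ) 1) :
    τ.toFun a b ≤ a := by
  have := τ.mono' a ha a ha b hb 1 ⟨zero_le_one, le_rfl⟩ le_rfl hb.2
  rwa [τ.one' a ha] at this

lemma one_left {b : ℝ} (hb : b ∈ Icc (0:ℝ) 1) : τ.toFun 1 b = b := by
  rw [τ.comm' 1 ⟨zero_le_one, le_rfl⟩ b hb, τ.one' b hb]

lemma le_right {a b : ℝ} (ha : a ∈ Icc (0:ℝ) 1) (hb : b ∈ Icc (0:ℝ) 1) :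
    τ.toFun a b ≤ b := by
  rw [τ.comm' a ha b hb]; exact τ.le_left hb ha

lemma zero_left {b : ℝ} (hb : b ∈ Icc (0:ℝ) 1) : τ.toFun 0 b = 0 :=
  le_antisymm (τ.le_left ⟨le_rfl, zero_le_one⟩ hb) (τ.mem' 0 ⟨le_rfl, zero_le_one⟩ b hb).1

/-- Uniform continuity of a continuous t-norm on the unit square. -/
lemma uc {τ : Tnorm} (h : τ.Cont) {ε : ℝ} (hε : 0 < ε) :
    ∃ δ > (0:ℝ), ∀ a ∈ Icc (0:ℝ) 1, ∀ b ∈ Icc (0:ℝ) 1, ∀ a' ∈ Icc (0:ℝ) 1, ∀ b' ∈ Icc (0:ℝ) 1,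
      |a - a'| < δ → |b - b'| < δ → |τ.toFun a b - τ.toFun a' b'| < ε := by
  have hc : IsCompact (Icc (0:ℝ) 1 ×ˢ Icc (0:ℝ) 1) := isCompact_Icc.prod isCompact_Icc
  have huc := hc.uniformContinuousOn_of_continuous h
  rw [Metric.uniformContinuousOn_iff] at huc
  obtain ⟨δ, hδ, H⟩ := huc ε hε
  refine ⟨δ, hδ, fun a ha b hb a' ha' b' hb' h1 h2 => ?_⟩
  have := H (a, b) ⟨ha, hb⟩ (a', b') ⟨ha', hb'⟩ (by
    rw [Prod.dist_eq]
    exact max_lt (by rwa [Real.dist_eq]) (by rwa [Real.dist_eq]))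
  rwa [Real.dist_eq] at this

/-- A continuous t-norm commutes with `sSup` in the first argument. -/
lemma map_sSup {τ : Tnorm} (h : τ.Cont) {t : ℝ} (ht : t ∈ Icc (0:ℝ) 1)
    {S : Set ℝ} (hS : S ⊆ Icc (0:ℝ) 1) (hne : S.Nonempty) :
    τ.toFun (sSup S) t = sSup ((fun s => τ.toFun s t) '' S) := by
  set F : ℝ → ℝ := fun a => τ.toFun (max 0 (min a 1)) t with hF
  have hclamp : ∀ a : ℝ, max 0 (min a 1) ∈ Icc (0:ℝ) 1 :=
    fun a => ⟨le_max_left _ _, max_le zero_le_one (min_le_right _ _)⟩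
  have hmono : Monotone F := fun a b hab =>
    τ.mono' _ (hclamp a) _ (hclamp b) t ht t ht
      (max_le_max le_rfl (min_le_min hab le_rfl)) le_rfl
  have hcont : Continuous F := by
    have hg : Continuous fun a : ℝ => ((max 0 (min a 1), t) : ℝ × ℝ) := by fun_prop
    exact h.comp_continuous hg (fun a => ⟨hclamp a, ht⟩)
  have hbdd : BddAbove S := ⟨1, fun s hs => (hS hs).2⟩
  have hsup : sSup S ∈ Icc (0:ℝ) 1 :=
    ⟨le_trans (hS hne.some_mem).1 (le_csSup hbdd hne.some_mem),
     csSup_le hne fun s hs => (hS hs).2⟩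
  have key := hmono.map_csSup_of_continuousAt hcont.continuousAt hne hbdd
  have e1 : F (sSup S) = τ.toFun (sSup S) t := by
    simp only [hF]
    rw [min_eq_left hsup.2, max_eq_right hsup.1]
  have e2 : F '' S = (fun s => τ.toFun s t) '' S :=
    image_congr fun s hs => by
      simp only [hF]
      rw [min_eq_left (hS hs).2, max_eq_right (hS hs).1]
  rw [← e1, key, e2]

end Tnorm
open Capacity

lemma poss_finset_lt {X : Type*} [TopologicalSpace X] {ν : Capacity X}
    (hν : IsPossibility ν) {ι : Type*} (s : Finset ι) (C : ι → Closeds X)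
    {a : ℝ} (ha : 0 < a) (h : ∀ i ∈ s, ν.toFun (C i) < a) :
    ν.toFun (s.sup C) < a := by
  classical
  induction s using Finset.induction_on with
  | empty => simpa [ν.empty'] using ha
  | insert _ _ hi ih =>
    rw [Finset.sup_insert, hν]
    exact max_lt (h _ (Finset.mem_insert_self _ _))
      (ih fun i his => h i (Finset.mem_insert_of_mem his))

/-- A possibility capacity on a compactum is determined by its density:
`ν(K) = sup {ν({x}) : x ∈ K}` for closed `K`. -/
lemma poss_repr {X : Type*} [TopologicalSpace X] [CompactSpace X] [T2Space X]
    {ν : Capacity X} (hν : IsPossibility ν) (K : Closeds X) :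
    ν.toFun K = sSup ((fun x => ν.cval {x}) '' (K : Set X)) := by
  rcases eq_empty_or_nonempty (K : Set X) with hK | hK
  · have hKbot : K = ⊥ := Closeds.ext (by rw [hK]; rfl)
    rw [hKbot, ν.empty']
    simp [Closeds.coe_bot, Real.sSup_empty]
  · have hsing : ∀ x : X, ν.cval {x} = ν.toFun ⟨{x}, isClosed_singleton⟩ :=
      fun x => ν.cval_of_closed isClosed_singleton
    have hbdd : BddAbove ((fun x => ν.cval {x}) '' (K : Set X)) :=
      ⟨1, by rintro r ⟨x, -, rfl⟩; exact (ν.cval_mem _).2⟩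
    have hub : sSup ((fun x => ν.cval {x}) '' (K : Set X)) ≤ ν.toFun K :=
      csSup_le (hK.image _) (by
        rintro r ⟨x, hx, rfl⟩
        show ν.cval {x} ≤ ν.toFun K
        rw [hsing]
        refine ν.mono' _ K ?_
        intro y hy
        have hy' : y = x := hy
        exact hy' ▸ hx)
    refine le_antisymm ?_ hub
    by_contra hlt
    push_neg at hlt
    set s := sSup ((fun x => ν.cval {x}) '' (K : Set X)) with hs
    set a := (s + ν.toFun K) / 2 with hadef
    obtain ⟨x₁, hx₁⟩ := hK
    have hs0 : (0:ℝ) ≤ s :=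
      le_trans (ν.cval_mem {x₁}).1 (le_csSup hbdd ⟨x₁, hx₁, rfl⟩)
    have hsa : s < a := by rw [hadef]; linarith
    have haK : a < ν.toFun K := by rw [hadef]; linarith
    have ha0 : 0 < a := lt_of_le_of_lt hs0 hsa
    have hexists : ∀ i : (K : Set X), ∃ V : Set X,
        IsOpen V ∧ i.1 ∈ V ∧ ν.toFun ⟨closure V, isClosed_closure⟩ < a := by
      rintro ⟨x, hx⟩
      have h1 : ν.toFun ⟨{x}, isClosed_singleton⟩ < a :=
        lt_of_le_of_lt (by rw [← hsing]; exact le_csSup hbdd ⟨x, hx, rfl⟩) hsa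
      obtain ⟨O, hOopen, hxO, hO⟩ := ν.usc' ⟨{x}, isClosed_singleton⟩ a h1
      obtain ⟨V, hVopen, hxV, hVcl⟩ := normal_exists_closure_subset isClosed_singleton hOopen hxO
      exact ⟨V, hVopen, hxV (mem_singleton x), hO ⟨closure V, isClosed_closure⟩ hVcl⟩
    choose V hVopen hmemV hVlt using hexists
    have hcover : (K : Set X) ⊆ ⋃ i : (K : Set X), V i :=
      fun x hx => mem_iUnion.2 ⟨⟨x, hx⟩, hmemV ⟨x, hx⟩⟩
    have hcomp : IsCompact (K : Set X) := K.isClosed.isCompact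
    obtain ⟨tf, htf⟩ := hcomp.elim_finite_subcover V hVopen hcover
    set C : ↥(K : Set X) → Closeds X := fun i => ⟨closure (V i), isClosed_closure⟩ with hC
    have hKle : K ≤ tf.sup C := by
      intro x hx
      obtain ⟨i, hi, hxi⟩ := mem_iUnion₂.1 (htf hx)
      exact (Finset.le_sup hi : C i ≤ tf.sup C) (subset_closure hxi)
    have hfin : ν.toFun (tf.sup C) < a :=
      poss_finset_lt hν tf C ha0 (fun i _ => hVlt i)
    exact absurd haK (not_lt.2 (le_of_lt (lt_of_le_of_lt (ν.mono' K _ hKle) hfin)))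

lemma poss_cval_repr {X : Type*} [TopologicalSpace X] [CompactSpace X] [T2Space X]
    {ν : Capacity X} (hν : IsPossibility ν) :
    ∀ B : Set X, IsClosed B → ν.cval B = sSup ((fun x => ν.cval {x}) '' B) :=
  fun B hB => by rw [ν.cval_of_closed hB, poss_repr hν ⟨B, hB⟩]; rfl

section tIntLemmas

variable {Z : Type*} [TopologicalSpace Z] (star : Tnorm) (ν : Capacity Z) (h : Z → ℝ)

lemma tInt_bddAbove :
    BddAbove {r : ℝ | ∃ t ∈ Icc (0:ℝ) 1, r = star.toFun (ν.cval (h ⁻¹' Icc t 1)) t} :=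
  ⟨1, by rintro r ⟨t, ht, rfl⟩; exact (star.mem' _ (ν.cval_mem _) t ht).2⟩

lemma tInt_set_nonempty :
    Set.Nonempty {r : ℝ | ∃ t ∈ Icc (0:ℝ) 1, r = star.toFun (ν.cval (h ⁻¹' Icc t 1)) t} :=
  ⟨_, 0, ⟨le_rfl, zero_le_one⟩, rfl⟩

lemma tInt_ge {t : ℝ} (ht : t ∈ Icc (0:ℝ) 1) :
    star.toFun (ν.cval (h ⁻¹' Icc t 1)) t ≤ tInt star ν h :=
  le_csSup (tInt_bddAbove star ν h) ⟨t, ht, rfl⟩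

lemma tInt_le {M : ℝ}
    (hM : ∀ t ∈ Icc (0:ℝ) 1, star.toFun (ν.cval (h ⁻¹' Icc t 1)) t ≤ M) :
    tInt star ν h ≤ M :=
  csSup_le (tInt_set_nonempty star ν h) (by rintro r ⟨t, ht, rfl⟩; exact hM t ht)

lemma tInt_nonneg : 0 ≤ tInt star ν h :=
  le_trans (star.mem' _ (ν.cval_mem _) 0 ⟨le_rfl, zero_le_one⟩).1
    (tInt_ge star ν h ⟨le_rfl, zero_le_one⟩)

lemma tInt_le_one : tInt star ν h ≤ 1 :=
  tInt_le star ν h fun t ht => (star.mem' _ (ν.cval_mem _) t ht).2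

end tIntLemmas

/-- Pointwise lower bound for the integral of a capacity with density `w`. -/
lemma tInt_ge_of_density {Z : Type*} [TopologicalSpace Z] (star : Tnorm)
    {ν : Capacity Z} {w : Z → ℝ}
    (hw : ∀ B : Set Z, IsClosed B → ν.cval B = sSup (w '' B))
    (hw01 : ∀ q, w q ∈ Icc (0:ℝ) 1)
    {h : Z → ℝ} (hh : Continuous h) (hh01 : ∀ q, h q ∈ Icc (0:ℝ) 1) (q : Z) :
    star.toFun (w q) (h q) ≤ tInt star ν h := by
  have hB : IsClosed (h ⁻¹' Icc (h q) 1) := isClosed_Icc.preimage hh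
  have hq : q ∈ h ⁻¹' Icc (h q) 1 := ⟨le_rfl, (hh01 q).2⟩
  have h1 : w q ≤ ν.cval (h ⁻¹' Icc (h q) 1) := by
    rw [hw _ hB]
    exact le_csSup ⟨1, by rintro r ⟨z, -, rfl⟩; exact (hw01 z).2⟩ ⟨q, hq, rfl⟩
  exact le_trans
    (star.mono' (w q) (hw01 q) _ (ν.cval_mem _) (h q) (hh01 q) (h q) (hh01 q) h1 le_rfl)
    (tInt_ge star ν h (hh01 q))

/-- Upper bound for the integral of a capacity with density `w`. -/
lemma tInt_le_of_density {Z : Type*} [TopologicalSpace Z] {star : Tnorm} (hstar : star.Cont)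
    {ν : Capacity Z} {w : Z → ℝ}
    (hw : ∀ B : Set Z, IsClosed B → ν.cval B = sSup (w '' B))
    (hw01 : ∀ q, w q ∈ Icc (0:ℝ) 1)
    {h : Z → ℝ} (hh : Continuous h) (hh01 : ∀ q, h q ∈ Icc (0:ℝ) 1)
    {M : ℝ} (hM0 : 0 ≤ M) (hM : ∀ q, star.toFun (w q) (h q) ≤ M) :
    tInt star ν h ≤ M := by
  refine tInt_le star ν h (fun t ht => ?_)
  have hB : IsClosed (h ⁻¹' Icc t 1) := isClosed_Icc.preimage hh
  rw [hw _ hB]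
  rcases eq_empty_or_nonempty (h ⁻¹' Icc t 1) with he | hne
  · rw [he, image_empty, Real.sSup_empty, star.zero_left ht]
    exact hM0
  · have hSsub : w '' (h ⁻¹' Icc t 1) ⊆ Icc (0:ℝ) 1 := by
      rintro r ⟨z, -, rfl⟩; exact hw01 z
    rw [Tnorm.map_sSup hstar ht hSsub (hne.image w)]
    refine csSup_le ((hne.image w).image _) ?_
    rintro r ⟨r', ⟨z, hz, rfl⟩, rfl⟩
    calc star.toFun (w z) t ≤ star.toFun (w z) (h z) :=
          star.mono' _ (hw01 z) _ (hw01 z) t ht _ (hh01 z) le_rfl hz.1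
      _ ≤ M := hM z
/-- in a two player game `(f,g)` on compacta `X × Y` with continuous
payoffs in `[0,1]`, if a pair of possibility capacities `(ν, μ)` is an equilibrium under
uncertainty with respect to a continuous t-norm `⋆`, then `(ν, μ)` is a Nash equilibrium
of the game in possibility-capacity strategies with payoffs
`ef(ν', μ') = ∫^{∨⋆} f d(ν' ⊛ μ')`, the tensor product being generated by a continuous
t-norm `∗`. -/
theorem equilibrium_is_nash_in_capacities {X : Type u} {Y : Type u}
    [TopologicalSpace X] [CompactSpace X] [T2Space X]
    [TopologicalSpace Y] [CompactSpace Y] [T2Space Y]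
    (f g : X × Y → ℝ) (hf : Continuous f) (hg : Continuous g)
    (hf01 : ∀ q, f q ∈ Icc (0:ℝ) 1) (hg01 : ∀ q, g q ∈ Icc (0:ℝ) 1)
    (star ast : Tnorm) (hstar : star.Cont) (hast : ast.Cont)
    (ν : Capacity X) (μ : Capacity Y) (hν : IsPossibility ν) (hμ : IsPossibility μ)
    -- `(ν, μ)` is an equilibrium under uncertainty with respect to `⋆`:
    (heq₁ : ν.oval ({x : X | tInt star μ (fun y => f (x, y)) =
        sSup (Set.range fun z : X => tInt star μ (fun y => f (z, y)))}ᶜ) = 0)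
    (heq₂ : μ.oval ({y : Y | tInt star ν (fun x => g (x, y)) =
        sSup (Set.range fun w : Y => tInt star ν (fun x => g (x, w)))}ᶜ) = 0) :
    -- `(ν, μ)` is a Nash equilibrium of the game in possibility-capacity strategies:
    (∀ ν' : Capacity X, IsPossibility ν' →
      ∀ τ' : Capacity (X × Y), IsPossTensor₂ ast ν' μ τ' →
      ∀ τ : Capacity (X × Y), IsPossTensor₂ ast ν μ τ →
        tInt star τ' f ≤ tInt star τ f) ∧
    (∀ μ' : Capacity Y, IsPossibility μ' →
      ∀ τ' : Capacity (X × Y), IsPossTensor₂ ast ν μ' τ' →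
      ∀ τ : Capacity (X × Y), IsPossTensor₂ ast ν μ τ →
        tInt star τ' g ≤ tInt star τ g) := by
  haveI hXne : Nonempty X := ν.nonempty_space
  haveI hYne : Nonempty Y := μ.nonempty_space
  constructor
  · -- Player 1
    intro ν' hν' τ' hτ' τ hτ
    have hMbdd : BddAbove (Set.range fun z : X => tInt star μ fun y => f (z, y)) :=
      ⟨1, by rintro r ⟨z, rfl⟩; exact tInt_le_one star μ _⟩
    have hM0 : (0:ℝ) ≤ sSup (Set.range fun z : X => tInt star μ fun y => f (z, y)) :=
      le_trans (tInt_nonneg star μ fun y => f (Classical.arbitrary X, y))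
        (le_csSup hMbdd (mem_range_self _))
    have hPge : ∀ (z : X) (y : Y),
        star.toFun (μ.cval {y}) (f (z, y)) ≤ tInt star μ (fun y => f (z, y)) := by
      intro z y
      have h1 : μ.cval {y} ≤ μ.cval ((fun y => f (z, y)) ⁻¹' Icc (f (z, y)) 1) :=
        μ.cval_mono (singleton_subset_iff.2 ⟨le_rfl, (hf01 (z, y)).2⟩)
      exact le_trans
        (star.mono' _ (μ.cval_mem _) _ (μ.cval_mem _) _ (hf01 (z, y)) _ (hf01 (z, y)) h1 le_rfl)
        (tInt_ge star μ _ (hf01 (z, y)))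
    have hup : tInt star τ' f ≤ sSup (Set.range fun z : X => tInt star μ fun y => f (z, y)) := by
      refine tInt_le_of_density hstar hτ'
        (fun q => ast.mem' _ (ν'.cval_mem _) _ (μ.cval_mem _)) hf hf01 hM0 ?_
      intro q
      calc star.toFun (ast.toFun (ν'.cval {q.1}) (μ.cval {q.2})) (f q)
          ≤ star.toFun (μ.cval {q.2}) (f q) :=
            star.mono' _ (ast.mem' _ (ν'.cval_mem _) _ (μ.cval_mem _)) _ (μ.cval_mem _)
              _ (hf01 q) _ (hf01 q) (ast.le_right (ν'.cval_mem _) (μ.cval_mem _)) le_rfl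
        _ ≤ tInt star μ (fun y => f (q.1, y)) := hPge q.1 q.2
        _ ≤ _ := le_csSup hMbdd (mem_range_self _)
    refine le_trans hup ?_
    refine le_of_forall_pos_le_add (fun ε hε => ?_)
    obtain ⟨δ₁, hδ₁, Hstar⟩ := Tnorm.uc hstar (half_pos hε)
    obtain ⟨δ₂, hδ₂, Hast⟩ := Tnorm.uc hast hδ₁
    set δ : ℝ := min δ₂ (1/2) with hδdef
    have hδpos : 0 < δ := lt_min hδ₂ (by norm_num)
    have hδle : δ ≤ 1/2 := min_le_right _ _
    have hδle₂ : δ ≤ δ₂ := min_le_left _ _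
    have h1 : sSup ((fun x => ν.cval {x}) '' ((⊤ : Closeds X) : Set X)) = 1 := by
      rw [← poss_repr hν ⊤, ν.univ']
    have h2 : (1:ℝ) - δ < sSup ((fun x => ν.cval {x}) '' ((⊤ : Closeds X) : Set X)) := by
      rw [h1]; linarith
    obtain ⟨r, hrmem, hr⟩ := exists_lt_of_lt_csSup
      (by rw [Closeds.coe_top]; exact univ_nonempty.image _) h2
    obtain ⟨x₀, -, rfl⟩ := hrmem
    have hd1 : ν.cval {x₀} ≤ 1 := (ν.cval_mem _).2
    have hdpos : 0 < ν.cval {x₀} := by linarith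
    have hx₀R : tInt star μ (fun y => f (x₀, y)) =
        sSup (Set.range fun z : X => tInt star μ fun y => f (z, y)) := by
      by_contra hne
      have hovalmem : ν.cval {x₀} ∈ {r : ℝ | ∃ K : Closeds X, (K : Set X) ⊆
          ({x : X | tInt star μ (fun y => f (x, y)) =
            sSup (Set.range fun z : X => tInt star μ (fun y => f (z, y)))}ᶜ) ∧ ν.toFun K = r} := by
        refine ⟨⟨{x₀}, isClosed_singleton⟩, ?_, (ν.cval_of_closed isClosed_singleton).symm⟩
        intro x hx
        have hx' : x = x₀ := hx
        simp only [mem_compl_iff, mem_setOf_eq, hx']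
        exact hne
      have hle : ν.cval {x₀} ≤ ν.oval ({x : X | tInt star μ (fun y => f (x, y)) =
          sSup (Set.range fun z : X => tInt star μ (fun y => f (z, y)))}ᶜ) :=
        le_csSup ⟨1, by rintro r ⟨K, -, rfl⟩; exact ν.le_one' K⟩ hovalmem
      rw [heq₁] at hle
      linarith
    have hpt : ∀ y : Y, star.toFun (μ.cval {y}) (f (x₀, y)) ≤ tInt star τ f + ε / 2 := by
      intro y
      have hast1 : |ast.toFun (ν.cval {x₀}) (μ.cval {y}) - μ.cval {y}| < δ₁ := by
        have e1 : ast.toFun 1 (μ.cval {y}) = μ.cval {y} := ast.one_left (μ.cval_mem _)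
        have h3 := Hast (ν.cval {x₀}) (ν.cval_mem _) (μ.cval {y}) (μ.cval_mem _)
          1 ⟨zero_le_one, le_rfl⟩ (μ.cval {y}) (μ.cval_mem _)
          (by rw [abs_sub_comm, abs_of_nonneg (by linarith)]; linarith)
          (by simpa using hδ₂)
        rwa [e1] at h3
      have hstar1 : |star.toFun (μ.cval {y}) (f (x₀, y)) -
          star.toFun (ast.toFun (ν.cval {x₀}) (μ.cval {y})) (f (x₀, y))| < ε / 2 :=
        Hstar (μ.cval {y}) (μ.cval_mem _) (f (x₀, y)) (hf01 _)
          (ast.toFun (ν.cval {x₀}) (μ.cval {y}))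
          (ast.mem' _ (ν.cval_mem _) _ (μ.cval_mem _)) (f (x₀, y)) (hf01 _)
          (by rw [abs_sub_comm]; exact hast1) (by simpa using hδ₁)
      have hti : star.toFun (ast.toFun (ν.cval {x₀}) (μ.cval {y})) (f (x₀, y)) ≤ tInt star τ f :=
        tInt_ge_of_density star hτ
          (fun q => ast.mem' _ (ν.cval_mem _) _ (μ.cval_mem _)) hf hf01 (x₀, y)
      have h4 := (abs_lt.1 hstar1).2
      linarith
    have hPle : tInt star μ (fun y => f (x₀, y)) ≤ tInt star τ f + ε / 2 :=
      tInt_le_of_density hstar (poss_cval_repr hμ) (fun y => μ.cval_mem _)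
        (hf.comp (Continuous.prodMk_right x₀)) (fun y => hf01 (x₀, y))
        (by linarith [tInt_nonneg star τ f]) hpt
    rw [← hx₀R]
    linarith
  · -- Player 2
    intro μ' hμ' τ' hτ' τ hτ
    have hMbdd : BddAbove (Set.range fun w : Y => tInt star ν fun x => g (x, w)) :=
      ⟨1, by rintro r ⟨w, rfl⟩; exact tInt_le_one star ν _⟩
    have hM0 : (0:ℝ) ≤ sSup (Set.range fun w : Y => tInt star ν fun x => g (x, w)) :=
      le_trans (tInt_nonneg star ν fun x => g (x, Classical.arbitrary Y))
        (le_csSup hMbdd (mem_range_self _))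
    have hPge : ∀ (w : Y) (x : X),
        star.toFun (ν.cval {x}) (g (x, w)) ≤ tInt star ν (fun x => g (x, w)) := by
      intro w x
      have h1 : ν.cval {x} ≤ ν.cval ((fun x => g (x, w)) ⁻¹' Icc (g (x, w)) 1) :=
        ν.cval_mono (singleton_subset_iff.2 ⟨le_rfl, (hg01 (x, w)).2⟩)
      exact le_trans
        (star.mono' _ (ν.cval_mem _) _ (ν.cval_mem _) _ (hg01 (x, w)) _ (hg01 (x, w)) h1 le_rfl)
        (tInt_ge star ν _ (hg01 (x, w)))
    have hup : tInt star τ' g ≤ sSup (Set.range fun w : Y => tInt star ν fun x => g (x, w)) := by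
      refine tInt_le_of_density hstar hτ'
        (fun q => ast.mem' _ (ν.cval_mem _) _ (μ'.cval_mem _)) hg hg01 hM0 ?_
      intro q
      calc star.toFun (ast.toFun (ν.cval {q.1}) (μ'.cval {q.2})) (g q)
          ≤ star.toFun (ν.cval {q.1}) (g q) :=
            star.mono' _ (ast.mem' _ (ν.cval_mem _) _ (μ'.cval_mem _)) _ (ν.cval_mem _)
              _ (hg01 q) _ (hg01 q) (ast.le_left (ν.cval_mem _) (μ'.cval_mem _)) le_rfl
        _ ≤ tInt star ν (fun x => g (x, q.2)) := hPge q.2 q.1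
        _ ≤ _ := le_csSup hMbdd (mem_range_self _)
    refine le_trans hup ?_
    refine le_of_forall_pos_le_add (fun ε hε => ?_)
    obtain ⟨δ₁, hδ₁, Hstar⟩ := Tnorm.uc hstar (half_pos hε)
    obtain ⟨δ₂, hδ₂, Hast⟩ := Tnorm.uc hast hδ₁
    set δ : ℝ := min δ₂ (1/2) with hδdef
    have hδpos : 0 < δ := lt_min hδ₂ (by norm_num)
    have hδle : δ ≤ 1/2 := min_le_right _ _
    have hδle₂ : δ ≤ δ₂ := min_le_left _ _
    have h1 : sSup ((fun y => μ.cval {y}) '' ((⊤ : Closeds Y) : Set Y)) = 1 := by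
      rw [← poss_repr hμ ⊤, μ.univ']
    have h2 : (1:ℝ) - δ < sSup ((fun y => μ.cval {y}) '' ((⊤ : Closeds Y) : Set Y)) := by
      rw [h1]; linarith
    obtain ⟨r, hrmem, hr⟩ := exists_lt_of_lt_csSup
      (by rw [Closeds.coe_top]; exact univ_nonempty.image _) h2
    obtain ⟨y₀, -, rfl⟩ := hrmem
    have hd1 : μ.cval {y₀} ≤ 1 := (μ.cval_mem _).2
    have hdpos : 0 < μ.cval {y₀} := by linarith
    have hy₀R : tInt star ν (fun x => g (x, y₀)) =
        sSup (Set.range fun w : Y => tInt star ν fun x => g (x, w)) := by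
      by_contra hne
      have hovalmem : μ.cval {y₀} ∈ {r : ℝ | ∃ K : Closeds Y, (K : Set Y) ⊆
          ({y : Y | tInt star ν (fun x => g (x, y)) =
            sSup (Set.range fun w : Y => tInt star ν (fun x => g (x, w)))}ᶜ) ∧ μ.toFun K = r} := by
        refine ⟨⟨{y₀}, isClosed_singleton⟩, ?_, (μ.cval_of_closed isClosed_singleton).symm⟩
        intro y hy
        have hy' : y = y₀ := hy
        simp only [mem_compl_iff, mem_setOf_eq, hy']
        exact hne
      have hle : μ.cval {y₀} ≤ μ.oval ({y : Y | tInt star ν (fun x => g (x, y)) =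
          sSup (Set.range fun w : Y => tInt star ν (fun x => g (x, w)))}ᶜ) :=
        le_csSup ⟨1, by rintro r ⟨K, -, rfl⟩; exact μ.le_one' K⟩ hovalmem
      rw [heq₂] at hle
      linarith
    have hpt : ∀ x : X, star.toFun (ν.cval {x}) (g (x, y₀)) ≤ tInt star τ g + ε / 2 := by
      intro x
      have hast1 : |ast.toFun (ν.cval {x}) (μ.cval {y₀}) - ν.cval {x}| < δ₁ := by
        have e1 : ast.toFun (ν.cval {x}) 1 = ν.cval {x} := ast.one' _ (ν.cval_mem _)
        have h3 := Hast (ν.cval {x}) (ν.cval_mem _) (μ.cval {y₀}) (μ.cval_mem _)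
          (ν.cval {x}) (ν.cval_mem _) 1 ⟨zero_le_one, le_rfl⟩
          (by simpa using hδ₂)
          (by rw [abs_sub_comm, abs_of_nonneg (by linarith)]; linarith)
        rwa [e1] at h3
      have hstar1 : |star.toFun (ν.cval {x}) (g (x, y₀)) -
          star.toFun (ast.toFun (ν.cval {x}) (μ.cval {y₀})) (g (x, y₀))| < ε / 2 :=
        Hstar (ν.cval {x}) (ν.cval_mem _) (g (x, y₀)) (hg01 _)
          (ast.toFun (ν.cval {x}) (μ.cval {y₀}))
          (ast.mem' _ (ν.cval_mem _) _ (μ.cval_mem _)) (g (x, y₀)) (hg01 _)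
          (by rw [abs_sub_comm]; exact hast1) (by simpa using hδ₁)
      have hti : star.toFun (ast.toFun (ν.cval {x}) (μ.cval {y₀})) (g (x, y₀)) ≤ tInt star τ g :=
        tInt_ge_of_density star hτ
          (fun q => ast.mem' _ (ν.cval_mem _) _ (μ.cval_mem _)) hg hg01 (x, y₀)
      have h4 := (abs_lt.1 hstar1).2
      linarith
    have hPle : tInt star ν (fun x => g (x, y₀)) ≤ tInt star τ g + ε / 2 :=
      tInt_le_of_density hstar (poss_cval_repr hν) (fun x => ν.cval_mem _)
        (hg.comp (continuous_id.prodMk continuous_const)) (fun x => hg01 (x, y₀))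
        (by linarith [tInt_nonneg star τ g]) hpt
    rw [← hy₀R]
    linarith
end Aux
end

section
/- For every compactum X, the set M_∪X of possibility capacities and the set M_∩X of necessity capacities are closed subsets of the compactum MX of all capacities on X. -/
open Set TopologicalSpace

universe u v

namespace Capacity

variable {X : Type u} [TopologicalSpace X]

lemma nonneg_s14 (ν : Capacity X) (F : Closeds X) : 0 ≤ ν.toFun F := by
  have h := ν.mono' ⊥ F bot_le
  rwa [ν.empty'] at h

lemma le_one (ν : Capacity X) (F : Closeds X) : ν.toFun F ≤ 1 := by
  have h := ν.mono' F ⊤ le_top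
  rwa [ν.univ'] at h

lemma oval_bdd (ν : Capacity X) (U : Set X) :
    BddAbove {r : ℝ | ∃ K : Closeds X, (K : Set X) ⊆ U ∧ ν.toFun K = r} :=
  ⟨1, fun r ⟨K, _, hK⟩ => hK ▸ ν.le_one K⟩

lemma oval_nonempty (ν : Capacity X) (U : Set X) :
    {r : ℝ | ∃ K : Closeds X, (K : Set X) ⊆ U ∧ ν.toFun K = r}.Nonempty :=
  ⟨ν.toFun ⊥, ⟨⊥, by simp, rfl⟩⟩

lemma le_oval (ν : Capacity X) {K : Closeds X} {U : Set X} (h : (K : Set X) ⊆ U) :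
    ν.toFun K ≤ ν.oval U :=
  le_csSup (ν.oval_bdd U) ⟨K, h, rfl⟩

lemma exists_of_lt_oval (ν : Capacity X) {U : Set X} {a : ℝ} (h : a < ν.oval U) :
    ∃ K : Closeds X, (K : Set X) ⊆ U ∧ a < ν.toFun K := by
  obtain ⟨_r, ⟨K, hK, rfl⟩, hr⟩ :=
    (lt_csSup_iff (ν.oval_bdd U) (ν.oval_nonempty U)).1 h
  exact ⟨K, hK, hr⟩

end Capacity

lemma isOpen_Ominus {X : Type u} [TopologicalSpace X] (F : Closeds X) {a : ℝ}
    (ha : a ∈ Icc (0:ℝ) 1) : IsOpen {c : Capacity X | c.toFun F < a} :=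
  TopologicalSpace.isOpen_generateFrom_of_mem (Or.inl ⟨F, a, ha, rfl⟩)

lemma isOpen_Oplus {X : Type u} [TopologicalSpace X] {U : Set X} (hU : IsOpen U) {a : ℝ}
    (ha : a ∈ Icc (0:ℝ) 1) : IsOpen {c : Capacity X | a < c.oval U} :=
  TopologicalSpace.isOpen_generateFrom_of_mem (Or.inr ⟨U, hU, a, ha, rfl⟩)


/-- for every compactum `X`, the set `M_∪X` of possibility capacities and
the set `M_∩X` of necessity capacities are closed subsets of the space `MX` of all
capacities. -/
theorem possibility_and_necessity_closed (X : Type u) [TopologicalSpace X]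
    [CompactSpace X] [T2Space X] :
    IsClosed {ν : Capacity X | IsPossibility ν} ∧
    IsClosed {ν : Capacity X | IsNecessity ν} := by
  constructor
  · rw [← isOpen_compl_iff, isOpen_iff_forall_mem_open]
    intro ν hν
    simp only [mem_compl_iff, mem_setOf_eq, IsPossibility, not_forall] at hν
    obtain ⟨A, B, hAB⟩ := hν
    have hmax : max (ν.toFun A) (ν.toFun B) ≤ ν.toFun (A ⊔ B) :=
      max_le (ν.mono' _ _ le_sup_left) (ν.mono' _ _ le_sup_right)
    have hlt : max (ν.toFun A) (ν.toFun B) < ν.toFun (A ⊔ B) :=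
      lt_of_le_of_ne hmax (Ne.symm hAB)
    obtain ⟨a, ha1, ha2⟩ := exists_between hlt
    have haIcc : a ∈ Icc (0:ℝ) 1 :=
      ⟨le_of_lt (lt_of_le_of_lt (le_trans (ν.nonneg_s14 A) (le_max_left _ _)) ha1),
       le_of_lt (lt_of_lt_of_le ha2 (ν.le_one _))⟩
    obtain ⟨OA, hOAopen, hAOA, hOA⟩ :=
      ν.usc' A a (lt_of_le_of_lt (le_max_left _ _) ha1)
    obtain ⟨OB, hOBopen, hBOB, hOB⟩ :=
      ν.usc' B a (lt_of_le_of_lt (le_max_right _ _) ha1)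
    obtain ⟨VA, hVAopen, hAVA, hclVA⟩ :=
      normal_exists_closure_subset A.isClosed hOAopen hAOA
    obtain ⟨VB, hVBopen, hBVB, hclVB⟩ :=
      normal_exists_closure_subset B.isClosed hOBopen hBOB
    set GA : Closeds X := ⟨closure VA, isClosed_closure⟩ with hGA
    set GB : Closeds X := ⟨closure VB, isClosed_closure⟩ with hGB
    refine ⟨{c : Capacity X | c.toFun GA < a} ∩ {c : Capacity X | c.toFun GB < a} ∩
        {c : Capacity X | a < c.oval (VA ∪ VB)}, ?_, ?_, ?_, ?_⟩
    · rintro c ⟨⟨h1, h2⟩, h3⟩ hp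
      obtain ⟨K, hKU, hK⟩ := c.exists_of_lt_oval h3
      have hKle : K ≤ GA ⊔ GB := by
        rw [← SetLike.coe_subset_coe, Closeds.coe_sup]
        exact hKU.trans (union_subset_union subset_closure subset_closure)
      have hbig : a < c.toFun (GA ⊔ GB) := lt_of_lt_of_le hK (c.mono' _ _ hKle)
      rw [hp GA GB] at hbig
      exact absurd hbig (not_lt.2 (max_lt h1 h2).le)
    · exact ((isOpen_Ominus GA haIcc).inter (isOpen_Ominus GB haIcc)).inter
        (isOpen_Oplus (hVAopen.union hVBopen) haIcc)
    · exact ⟨hOA GA hclVA, hOB GB hclVB⟩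
    · exact lt_of_lt_of_le ha2 (ν.le_oval (by
          rw [Closeds.coe_sup]
          exact union_subset_union hAVA hBVB))
  · rw [← isOpen_compl_iff, isOpen_iff_forall_mem_open]
    intro ν hν
    simp only [mem_compl_iff, mem_setOf_eq, IsNecessity, not_forall] at hν
    obtain ⟨A, B, hAB⟩ := hν
    have hmin : ν.toFun (A ⊓ B) ≤ min (ν.toFun A) (ν.toFun B) :=
      le_min (ν.mono' _ _ inf_le_left) (ν.mono' _ _ inf_le_right)
    have hlt : ν.toFun (A ⊓ B) < min (ν.toFun A) (ν.toFun B) :=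
      lt_of_le_of_ne hmin hAB
    obtain ⟨a, ha1, ha2⟩ := exists_between hlt
    have haIcc : a ∈ Icc (0:ℝ) 1 :=
      ⟨le_of_lt (lt_of_le_of_lt (ν.nonneg_s14 _) ha1),
       le_of_lt (lt_of_lt_of_le ha2 (le_trans (min_le_left _ _) (ν.le_one _)))⟩
    obtain ⟨O, hOopen, hABO, hO⟩ := ν.usc' (A ⊓ B) a ha1
    obtain ⟨O', hO'open, hABO', hclO'⟩ :=
      normal_exists_closure_subset (A ⊓ B).isClosed hOopen hABO
    have hABsub : (A : Set X) ∩ (B : Set X) ⊆ O' := by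
      rw [← Closeds.coe_inf]; exact hABO'
    have hCclosed : IsClosed ((A : Set X) \ O') := A.isClosed.sdiff hO'open
    have hDclosed : IsClosed ((B : Set X) \ O') := B.isClosed.sdiff hO'open
    have hCD : ((A : Set X) \ O') ⊆ ((B : Set X) \ O')ᶜ := by
      rintro x ⟨hxA, hxO⟩ hxd
      exact hxO (hABsub ⟨hxA, hxd.1⟩)
    obtain ⟨W1, hW1open, hCW1, hclW1⟩ :=
      normal_exists_closure_subset hCclosed hDclosed.isOpen_compl hCD
    obtain ⟨W2, hW2open, hDW2, hclW2⟩ :=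
      normal_exists_closure_subset hDclosed isClosed_closure.isOpen_compl
        (fun x hx hc => hclW1 hc hx)
    set GA : Closeds X := ⟨closure (W1 ∪ O'), isClosed_closure⟩ with hGAdef
    set GB : Closeds X := ⟨closure (W2 ∪ O'), isClosed_closure⟩ with hGBdef
    have hFsub : (↑(GA ⊓ GB) : Set X) ⊆ O := by
      rw [Closeds.coe_inf]
      rintro x ⟨hx1, hx2⟩
      rw [hGAdef] at hx1; rw [hGBdef] at hx2
      simp only [Closeds.coe_mk, closure_union] at hx1 hx2
      rcases hx1 with hx1 | hx1
      · rcases hx2 with hx2 | hx2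
        · exact absurd hx1 (hclW2 hx2)
        · exact hclO' hx2
      · exact hclO' hx1
    have hAUA : (A : Set X) ⊆ W1 ∪ O' := by
      intro x hx
      by_cases hxO : x ∈ O'
      · exact Or.inr hxO
      · exact Or.inl (hCW1 ⟨hx, hxO⟩)
    have hBUB : (B : Set X) ⊆ W2 ∪ O' := by
      intro x hx
      by_cases hxO : x ∈ O'
      · exact Or.inr hxO
      · exact Or.inl (hDW2 ⟨hx, hxO⟩)
    refine ⟨{c : Capacity X | c.toFun (GA ⊓ GB) < a} ∩
        {c : Capacity X | a < c.oval (W1 ∪ O')} ∩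
        {c : Capacity X | a < c.oval (W2 ∪ O')}, ?_, ?_, ?_, ?_⟩
    · rintro c ⟨⟨h1, h2⟩, h3⟩ hn
      obtain ⟨K1, hK1U, hK1⟩ := c.exists_of_lt_oval h2
      obtain ⟨K2, hK2U, hK2⟩ := c.exists_of_lt_oval h3
      have hle1 : K1 ≤ GA := by
        rw [← SetLike.coe_subset_coe]; exact hK1U.trans subset_closure
      have hle2 : K2 ≤ GB := by
        rw [← SetLike.coe_subset_coe]; exact hK2U.trans subset_closure
      have hga : a < c.toFun GA := lt_of_lt_of_le hK1 (c.mono' _ _ hle1)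
      have hgb : a < c.toFun GB := lt_of_lt_of_le hK2 (c.mono' _ _ hle2)
      have h1' : c.toFun (GA ⊓ GB) < a := h1
      rw [hn GA GB] at h1'
      exact absurd h1' (not_lt.2 (le_min hga.le hgb.le))
    · exact ((isOpen_Ominus (GA ⊓ GB) haIcc).inter
        (isOpen_Oplus (hW1open.union hO'open) haIcc)).inter
        (isOpen_Oplus (hW2open.union hO'open) haIcc)
    · exact ⟨hO (GA ⊓ GB) hFsub,
         lt_of_lt_of_le (lt_of_lt_of_le ha2 (min_le_left _ _)) (ν.le_oval hAUA)⟩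
    · exact lt_of_lt_of_le (lt_of_lt_of_le ha2 (min_le_right _ _)) (ν.le_oval hBUB)
end

section
/- Let X₁, X₂ be compacta, ∗ a continuous t-norm, and μ₁ ∈ M_∪X₁, μ₂ ∈ M_∪X₂ possibility capacities. Then the marginals of the tensor product generated by ∗ recover the factors: M(p₁)(μ₁ ⊛ μ₂) = μ₁ and M(p₂)(μ₁ ⊛ μ₂) = μ₂, where p₁, p₂ are the coordinate projections of X₁ × X₂ and for a continuous map f: X → Y and capacity ν ∈ MX, Mf(ν)(A) = ν(f⁻¹(A)) for closed A ⊆ Y. -/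
open Set TopologicalSpace

universe u v

namespace CapacityAux

open Capacity

variable {Z : Type*} [TopologicalSpace Z]

lemma toFun_nonneg (ν : Capacity Z) (C : Closeds Z) : 0 ≤ ν.toFun C := by
  rw [← ν.empty']; exact ν.mono' _ _ bot_le

lemma toFun_le_one (ν : Capacity Z) (C : Closeds Z) : ν.toFun C ≤ 1 := by
  rw [← ν.univ']; exact ν.mono' _ _ le_top

lemma cval_closed (ν : Capacity Z) {A : Set Z} (h : IsClosed A) :
    ν.cval A = ν.toFun ⟨A, h⟩ := by
  unfold Capacity.cval; congr 1; exact SetLike.ext' h.closure_eq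

lemma cval_mono (ν : Capacity Z) {A B : Set Z} (hA : IsClosed A) (hB : IsClosed B)
    (h : A ⊆ B) : ν.cval A ≤ ν.cval B := by
  rw [cval_closed ν hA, cval_closed ν hB]; exact ν.mono' _ _ h

lemma cval_nonneg (ν : Capacity Z) {A : Set Z} (h : IsClosed A) : 0 ≤ ν.cval A := by
  rw [cval_closed ν h]; exact toFun_nonneg ν _

lemma cval_le_one (ν : Capacity Z) {A : Set Z} (h : IsClosed A) : ν.cval A ≤ 1 := by
  rw [cval_closed ν h]; exact toFun_le_one ν _

lemma cval_singleton_mem [T1Space Z] (ν : Capacity Z) (x : Z) :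
    ν.cval {x} ∈ Icc (0:ℝ) 1 :=
  ⟨cval_nonneg ν isClosed_singleton, cval_le_one ν isClosed_singleton⟩

/-- Two-set shrinking lemma in a normal space. -/
lemma shrink2 [NormalSpace Z] {C U V : Set Z} (hC : IsClosed C) (hU : IsOpen U)
    (hV : IsOpen V) (h : C ⊆ U ∪ V) :
    ∃ A B : Set Z, IsClosed A ∧ IsClosed B ∧ A ⊆ U ∧ B ⊆ V ∧ A ∪ B = C := by
  have hD1 : IsClosed (C \ U) := hC.sdiff hU
  have hD2 : IsClosed (C \ V) := hC.sdiff hV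
  have hdisj : Disjoint (C \ U) (C \ V) := by
    rw [Set.disjoint_left]
    rintro x ⟨hxC, hxU⟩ ⟨-, hxV⟩
    rcases h hxC with h' | h'
    · exact hxU h'
    · exact hxV h'
  obtain ⟨W₁, W₂, hW₁, hW₂, hsub₁, hsub₂, hWd⟩ := NormalSpace.normal _ _ hD1 hD2 hdisj
  refine ⟨C \ W₁, C \ W₂, hC.sdiff hW₁, hC.sdiff hW₂, ?_, ?_, ?_⟩
  · rintro x ⟨hxC, hxW⟩
    by_contra hxU
    exact hxW (hsub₁ ⟨hxC, hxU⟩)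
  · rintro x ⟨hxC, hxW⟩
    by_contra hxV
    exact hxW (hsub₂ ⟨hxC, hxV⟩)
  · rw [← Set.diff_inter, hWd.inter_eq, Set.diff_empty]

/-- If every closed subset of each `O i` has capacity `< a`, then so does any closed set
covered by finitely many of the `O i`. -/
lemma lt_of_cover [NormalSpace Z] (ν : Capacity Z) (hν : IsPossibility ν) {a : ℝ}
    (ha : 0 < a) {ι : Type*} (O : ι → Set Z) (hO : ∀ i, IsOpen (O i))
    (hbound : ∀ i, ∀ B : Closeds Z, (B : Set Z) ⊆ O i → ν.toFun B < a) :
    ∀ (t : Finset ι) (C : Closeds Z), (C : Set Z) ⊆ ⋃ i ∈ t, O i → ν.toFun C < a := by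
  intro t
  classical
  induction t using Finset.induction_on with
  | empty =>
    intro C hC
    simp only [Finset.notMem_empty, Set.iUnion_of_empty, Set.iUnion_empty] at hC
    have : C = ⊥ := SetLike.ext' (Set.subset_empty_iff.mp hC)
    rw [this, ν.empty']; exact ha
  | insert j t' hj ih =>
    intro C hC
    rw [Finset.set_biUnion_insert] at hC
    obtain ⟨A, B, hAc, hBc, hAU, hBV, hABeq⟩ :=
      shrink2 C.isClosed (hO j) (isOpen_biUnion fun i _ => hO i) hC
    have hCeq : C = (⟨A, hAc⟩ : Closeds Z) ⊔ ⟨B, hBc⟩ :=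
      SetLike.ext' (by rw [Closeds.coe_sup]; exact hABeq.symm)
    rw [hCeq, hν]
    exact max_lt (hbound j ⟨A, hAc⟩ hAU) (ih ⟨B, hBc⟩ hBV)

/-- A possibility capacity on a compactum attains its value on a closed set as the
supremum of its densities. -/
lemma density {Z : Type*} [TopologicalSpace Z] [CompactSpace Z] [T2Space Z]
    (ν : Capacity Z) (hν : IsPossibility ν) {F : Set Z} (hF : IsClosed F)
    (hne : F.Nonempty) :
    ν.cval F = sSup ((fun x => ν.cval {x}) '' F) := by
  set S := (fun x => ν.cval {x}) '' F with hS
  have hSne : S.Nonempty := hne.image _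
  have hSbdd : BddAbove S := by
    refine ⟨1, ?_⟩
    rintro r ⟨x, hx, rfl⟩
    exact cval_le_one ν isClosed_singleton
  have hS0 : 0 ≤ sSup S := by
    obtain ⟨x, hx⟩ := hne
    exact le_trans (cval_nonneg ν isClosed_singleton) (le_csSup hSbdd ⟨x, hx, rfl⟩)
  refine le_antisymm ?_ (csSup_le hSne ?_)
  · -- ν.cval F ≤ sSup S
    by_contra hcon
    push_neg at hcon
    set a : ℝ := (sSup S + ν.cval F) / 2 with ha_def
    have ha1 : sSup S < a := by simp only [ha_def]; linarith
    have ha2 : a < ν.cval F := by simp only [ha_def]; linarith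
    have ha0 : 0 < a := lt_of_le_of_lt hS0 ha1
    have key : ∀ x : F, ∃ O : Set Z, IsOpen O ∧
        ((⟨{(x : Z)}, isClosed_singleton⟩ : Closeds Z) : Set Z) ⊆ O ∧
        ∀ B : Closeds Z, (B : Set Z) ⊆ O → ν.toFun B < a := by
      intro x
      refine ν.usc' ⟨{(x : Z)}, isClosed_singleton⟩ a ?_
      have hmem : ν.cval {(x : Z)} ∈ S := ⟨x, x.2, rfl⟩
      have : ν.cval {(x : Z)} ≤ sSup S := le_csSup hSbdd hmem
      rw [cval_closed ν isClosed_singleton] at this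
      exact lt_of_le_of_lt this ha1
    choose O hOopen hOmem hObd using key
    obtain ⟨t, ht⟩ := hF.isCompact.elim_finite_subcover O hOopen
      (fun x hx => Set.mem_iUnion.mpr ⟨⟨x, hx⟩, hOmem ⟨x, hx⟩ rfl⟩)
    have := lt_of_cover ν hν ha0 O hOopen hObd t ⟨F, hF⟩ ht
    rw [← cval_closed ν hF] at this
    linarith
  · -- sSup S ≤ ν.cval F
    rintro r ⟨x, hx, rfl⟩
    exact cval_mono ν isClosed_singleton hF (Set.singleton_subset_iff.mpr hx)

/-- The key computation: the sup of the tensor density over `A × Y` is `μ(A)`. -/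
lemma key {X Y : Type*} [TopologicalSpace X] [CompactSpace X] [T2Space X]
    [TopologicalSpace Y] [CompactSpace Y] [T2Space Y] [Nonempty Y]
    (ast : Tnorm) (hast : ast.Cont)
    (μ : Capacity X) (κ : Capacity Y) (hμ : IsPossibility μ) (hκ : IsPossibility κ)
    {A : Set X} (hA : IsClosed A) :
    sSup ((fun q : X × Y => ast.toFun (μ.cval {q.1}) (κ.cval {q.2})) '' (A ×ˢ univ))
      = μ.cval A := by
  rcases A.eq_empty_or_nonempty with rfl | hne
  · rw [Set.empty_prod, Set.image_empty, Real.sSup_empty,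
      cval_closed μ isClosed_empty]
    have : (⟨∅, isClosed_empty⟩ : Closeds X) = ⊥ := SetLike.ext' rfl
    rw [this, μ.empty']
  · set S := (fun q : X × Y => ast.toFun (μ.cval {q.1}) (κ.cval {q.2})) '' (A ×ˢ univ)
      with hSdef
    have hSne : S.Nonempty := by
      obtain ⟨x, hx⟩ := hne
      obtain ⟨y⟩ := ‹Nonempty Y›
      exact ⟨_, ⟨(x, y), ⟨hx, trivial⟩, rfl⟩⟩
    have hSbdd : BddAbove S := by
      refine ⟨1, ?_⟩
      rintro r ⟨⟨x, y⟩, -, rfl⟩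
      exact (ast.mem' _ (cval_singleton_mem μ x) _ (cval_singleton_mem κ y)).2
    refine le_antisymm (csSup_le hSne ?_) ?_
    · rintro r ⟨⟨x, y⟩, ⟨hx, -⟩, rfl⟩
      have h1 : ast.toFun (μ.cval {x}) (κ.cval {y}) ≤ ast.toFun (μ.cval {x}) 1 :=
        ast.mono' _ (cval_singleton_mem μ x) _ (cval_singleton_mem μ x)
          _ (cval_singleton_mem κ y) _ (by norm_num) le_rfl (cval_singleton_mem κ y).2
      rw [ast.one' _ (cval_singleton_mem μ x)] at h1
      exact h1.trans (cval_mono μ isClosed_singleton hA (Set.singleton_subset_iff.mpr hx))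
    · rw [density μ hμ hA hne]
      refine csSup_le (hne.image _) ?_
      rintro r ⟨x, hx, rfl⟩
      set d : ℝ := μ.cval {x} with hd_def
      have hd : d ∈ Icc (0:ℝ) 1 := cval_singleton_mem μ x
      refine le_of_forall_pos_le_add ?_
      intro ε hε
      -- continuity of `ast` at `(d, 1)`
      have hp : ((d, 1) : ℝ × ℝ) ∈ Icc (0:ℝ) 1 ×ˢ Icc (0:ℝ) 1 :=
        ⟨hd, by norm_num⟩
      have hcw := hast (d, 1) hp
      rw [Metric.continuousWithinAt_iff] at hcw
      obtain ⟨δ, hδ, hδ'⟩ := hcw ε hε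
      -- find `y` with density close to 1
      have hκuniv : sSup ((fun y => κ.cval {y}) '' (univ : Set Y)) = 1 := by
        rw [← density κ hκ isClosed_univ Set.univ_nonempty,
          cval_closed κ isClosed_univ]
        have : (⟨univ, isClosed_univ⟩ : Closeds Y) = ⊤ := SetLike.ext' rfl
        rw [this, κ.univ']
      have hlt : 1 - δ < sSup ((fun y => κ.cval {y}) '' (univ : Set Y)) := by
        rw [hκuniv]; linarith
      obtain ⟨r, ⟨y, -, rfl⟩, hy⟩ :=
        exists_lt_of_lt_csSup (Set.univ_nonempty.image _) hlt
      set e : ℝ := κ.cval {y} with he_def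
      have he : e ∈ Icc (0:ℝ) 1 := cval_singleton_mem κ y
      have hdist : dist ((d, e) : ℝ × ℝ) (d, 1) < δ := by
        rw [Prod.dist_eq]
        simp only [dist_self]
        rw [Real.dist_eq, abs_of_nonpos (by linarith [he.2])]
        simp only [max_lt_iff]
        constructor <;> [exact hδ; linarith]
      have hcl := hδ' (Set.mk_mem_prod hd he) hdist
      rw [Real.dist_eq, ast.one' d hd] at hcl
      have hgt : d - ε < ast.toFun d e := by
        have := abs_lt.mp hcl
        linarith [this.1]
      have hmem : ast.toFun d e ∈ S := ⟨(x, y), ⟨hx, trivial⟩, rfl⟩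
      have : ast.toFun d e ≤ sSup S := le_csSup hSbdd hmem
      linarith

end CapacityAux

/-- the marginals of the tensor product (generated by a continuous t-norm)
of two possibility capacities recover the factors:
`M(p₁)(μ₁ ⊛ μ₂) = μ₁` and `M(p₂)(μ₁ ⊛ μ₂) = μ₂`, where `Mf(ν)(A) = ν(f⁻¹(A))`. -/
theorem tensor_product_marginals {X : Type u} {Y : Type u}
    [TopologicalSpace X] [CompactSpace X] [T2Space X]
    [TopologicalSpace Y] [CompactSpace Y] [T2Space Y]
    (ast : Tnorm) (hast : ast.Cont)
    (μ₁ : Capacity X) (μ₂ : Capacity Y) (hμ₁ : IsPossibility μ₁) (hμ₂ : IsPossibility μ₂)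
    (τ : Capacity (X × Y)) (hτ : IsPossTensor₂ ast μ₁ μ₂ τ) :
    (∀ A : Set X, IsClosed A → τ.cval (Prod.fst ⁻¹' A) = μ₁.cval A) ∧
    (∀ A : Set Y, IsClosed A → τ.cval (Prod.snd ⁻¹' A) = μ₂.cval A) := by
  classical
  have hXYne : Nonempty (X × Y) := by
    by_contra h
    rw [not_nonempty_iff] at h
    have hbt : (⊥ : Closeds (X × Y)) = ⊤ := SetLike.ext' (Subsingleton.elim _ _)
    have h01 : (0 : ℝ) = 1 := by rw [← τ.empty', hbt, τ.univ']
    norm_num at h01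
  have hX : Nonempty X := ⟨hXYne.some.1⟩
  have hY : Nonempty Y := ⟨hXYne.some.2⟩
  constructor
  · intro A hA
    have hp : Prod.fst ⁻¹' A = A ×ˢ (univ : Set Y) := Set.prod_univ.symm
    rw [hp, hτ _ (hA.prod isClosed_univ)]
    exact CapacityAux.key ast hast μ₁ μ₂ hμ₁ hμ₂ hA
  · intro A hA
    have hp : Prod.snd ⁻¹' A = (univ : Set X) ×ˢ A := Set.univ_prod.symm
    rw [hp, hτ _ (isClosed_univ.prod hA)]
    have himg : (fun q : X × Y => ast.toFun (μ₁.cval {q.1}) (μ₂.cval {q.2})) ''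
        ((univ : Set X) ×ˢ A) =
        (fun q : Y × X => ast.toFun (μ₂.cval {q.1}) (μ₁.cval {q.2})) ''
        (A ×ˢ (univ : Set X)) := by
      ext r
      constructor
      · rintro ⟨⟨x, y⟩, ⟨-, hy⟩, rfl⟩
        exact ⟨(y, x), ⟨hy, trivial⟩,
          ast.comm' _ (CapacityAux.cval_singleton_mem μ₂ y) _
            (CapacityAux.cval_singleton_mem μ₁ x)⟩
      · rintro ⟨⟨y, x⟩, ⟨hy, -⟩, rfl⟩
        exact ⟨(x, y), ⟨trivial, hy⟩,
          ast.comm' _ (CapacityAux.cval_singleton_mem μ₁ x) _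
            (CapacityAux.cval_singleton_mem μ₂ y)⟩
    rw [himg]
    exact CapacityAux.key ast hast μ₂ μ₁ hμ₂ hμ₁ hA
end
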